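/- Let A, C ∈ ℝ^{n×n}, B, D ∈ ℝ^{n×m}, let Q ∈ ℝ^{n×n} and R ∈ ℝ^{m×m} be symmetric positive definite, and let γ ∈ [0,1). Let (L_i)_{i≥0} and symmetric positive definite (P_i)_{i≥0} satisfy the policy-iteration recursion: P_i = γ(A+BL_i)ᵀP_i(A+BL_i) + γ(C+DL_i)ᵀP_i(C+DL_i) + L_iᵀRL_i + Q and L_{i+1} = −(R + γBᵀP_iB + γDᵀP_iD)⁻¹(γBᵀP_iA + γDᵀP_iC) for all i. Suppose P* is the unique symmetric positive definite solution of the stochastic algebraic Riccati equation P* = Q + γAᵀP*A + γCᵀP*C − (γAᵀP*B + γCᵀP*D)(R + γBᵀP*B + γDᵀP*D)⁻¹(γBᵀP*A + γDᵀP*C), and let L* = −(R + γBᵀP*B + γDᵀP*D)⁻¹(γBᵀP*A + γDᵀP*C). Then P_i converges to P* and L_i converges to L* as i → ∞. -/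

import Mathlib

open Matrix Filter Topology

namespace Stmt13Aux

variable {n m : ℕ}

def qf (M : Matrix (Fin n) (Fin n) ℝ) (x : Fin n → ℝ) : ℝ := x ⬝ᵥ M *ᵥ x

lemma qf_conj (M : Matrix (Fin n) (Fin n) ℝ) (E : Matrix (Fin n) (Fin n) ℝ) (x : Fin n → ℝ) :
    qf (Eᵀ * M * E) x = qf M (E *ᵥ x) := by
  unfold qf
  rw [Matrix.mul_assoc, ← Matrix.mulVec_mulVec, dotProduct_mulVec, vecMul_transpose,
    ← Matrix.mulVec_mulVec, dotProduct_mulVec, dotProduct_mulVec]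

lemma qf_conj' (M : Matrix (Fin n) (Fin n) ℝ) (E : Matrix (Fin n) (Fin m) ℝ) (x : Fin m → ℝ) :
    qf (Eᵀ * M * E) x = qf M (E *ᵥ x) := by
  unfold qf
  rw [Matrix.mul_assoc, ← Matrix.mulVec_mulVec, dotProduct_mulVec, vecMul_transpose,
    ← Matrix.mulVec_mulVec, dotProduct_mulVec, dotProduct_mulVec]

lemma qf_add (M N : Matrix (Fin n) (Fin n) ℝ) (x : Fin n → ℝ) :
    qf (M + N) x = qf M x + qf N x := by
  simp [qf, Matrix.add_mulVec, dotProduct_add]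

lemma qf_smul (c : ℝ) (M : Matrix (Fin n) (Fin n) ℝ) (x : Fin n → ℝ) :
    qf (c • M) x = c * qf M x := by
  simp [qf, Matrix.smul_mulVec, dotProduct_smul]

lemma qf_sub (M N : Matrix (Fin n) (Fin n) ℝ) (x : Fin n → ℝ) :
    qf (M - N) x = qf M x - qf N x := by
  simp [qf, Matrix.sub_mulVec, dotProduct_sub]

lemma posSemidef_iff_qf (M : Matrix (Fin n) (Fin n) ℝ) :
    M.PosSemidef ↔ M.IsHermitian ∧ ∀ x, 0 ≤ qf M x := by
  constructor
  · intro h; exact ⟨h.1, fun x => by simpa [qf] using (posSemidef_iff_dotProduct_mulVec.mp h).2 x⟩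
  · intro h; exact posSemidef_iff_dotProduct_mulVec.mpr ⟨h.1, fun x => by simpa [qf] using h.2 x⟩

lemma PosSemidef.qf_nonneg {M : Matrix (Fin n) (Fin n) ℝ} (h : M.PosSemidef) (x : Fin n → ℝ) :
    0 ≤ qf M x := ((posSemidef_iff_qf M).mp h).2 x

lemma PosDef.qf_pos {M : Matrix (Fin n) (Fin n) ℝ} (h : M.PosDef) {x : Fin n → ℝ} (hx : x ≠ 0) :
    0 < qf M x := by simpa [qf] using (posDef_iff_dotProduct_mulVec.mp h).2 hx

lemma isHermitian_iff_transpose (M : Matrix (Fin n) (Fin n) ℝ) : M.IsHermitian ↔ Mᵀ = M := by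
  rw [Matrix.IsHermitian, Matrix.conjTranspose_eq_transpose_of_trivial]

lemma posDef_of_qf {M : Matrix (Fin n) (Fin n) ℝ} (hsym : Mᵀ = M)
    (h : ∀ x, x ≠ 0 → 0 < qf M x) : M.PosDef := by
  refine posDef_iff_dotProduct_mulVec.mpr ⟨(isHermitian_iff_transpose M).mpr hsym, fun x hx => ?_⟩
  simpa [qf] using h x hx

lemma qf_continuous (M : Matrix (Fin n) (Fin n) ℝ) : Continuous fun x => qf M x :=
  continuous_id.dotProduct
    ((continuous_const : Continuous fun _ => M).matrix_mulVec continuous_id)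

lemma qf_continuous_matrix (x : Fin n → ℝ) :
    Continuous fun M : Matrix (Fin n) (Fin n) ℝ => qf M x :=
  continuous_const.dotProduct (continuous_id.matrix_mulVec continuous_const)

lemma qf_smul_vec (M : Matrix (Fin n) (Fin n) ℝ) (c : ℝ) (x : Fin n → ℝ) :
    qf M (c • x) = c^2 * qf M x := by
  simp [qf, Matrix.mulVec_smul, dotProduct_smul, smul_dotProduct]
  ring

lemma comparison (γ : ℝ) (hγ : 0 ≤ γ) (M₁ M₂ Pm G Δ : Matrix (Fin n) (Fin n) ℝ)
    (hPpos : ∀ x, x ≠ 0 → 0 < qf Pm x) (hGpos : ∀ x, x ≠ 0 → 0 < qf G x)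
    (hPeq : ∀ x, qf Pm x = γ * qf Pm (M₁ *ᵥ x) + γ * qf Pm (M₂ *ᵥ x) + qf G x)
    (hΔ : ∀ x, qf Δ x ≤ γ * qf Δ (M₁ *ᵥ x) + γ * qf Δ (M₂ *ᵥ x)) :
    ∀ x, qf Δ x ≤ 0 := by
  rcases Nat.eq_zero_or_pos n with hn | hn
  · intro x
    have : x = 0 := by ext i; exact absurd i.2 (by omega)
    simp [this, qf]
  have hne : (Metric.sphere (0 : Fin n → ℝ) 1).Nonempty := by
    have : Nontrivial (Fin n → ℝ) := by
      haveI : NeZero n := ⟨by omega⟩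
      infer_instance
    exact NormedSpace.sphere_nonempty.mpr zero_le_one
  have hcomp : IsCompact (Metric.sphere (0 : Fin n → ℝ) 1) := isCompact_sphere 0 1
  have hcont : ContinuousOn (fun x => qf Δ x / qf Pm x) (Metric.sphere (0 : Fin n → ℝ) 1) := by
    apply ContinuousOn.div (qf_continuous Δ).continuousOn (qf_continuous Pm).continuousOn
    intro x hx
    have hx0 : x ≠ 0 := by
      intro h; rw [h] at hx; simp at hx
    exact (hPpos x hx0).ne'
  obtain ⟨x₀, hx₀s, hx₀max⟩ := hcomp.exists_isMaxOn hne hcont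
  set lam := qf Δ x₀ / qf Pm x₀ with hlam
  have hx₀0 : x₀ ≠ 0 := by
    intro h; rw [h] at hx₀s; simp at hx₀s
  have hP₀ : 0 < qf Pm x₀ := hPpos x₀ hx₀0
  have hkey : ∀ y, qf Δ y ≤ lam * qf Pm y := by
    intro y
    rcases eq_or_ne y 0 with rfl | hy
    · simp [qf]
    · have hny : ‖y‖ ≠ 0 := norm_ne_zero_iff.mpr hy
      set u := ‖y‖⁻¹ • y with hu
      have hus : u ∈ Metric.sphere (0 : Fin n → ℝ) 1 := by
        simp [hu, norm_smul, abs_of_nonneg (inv_nonneg.mpr (norm_nonneg y)),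
          inv_mul_cancel₀ hny]
      have hu0 : u ≠ 0 := by
        intro h; rw [h] at hus; simp at hus
      have hdiv : qf Δ u / qf Pm u ≤ lam := hx₀max hus
      have hPu : 0 < qf Pm u := hPpos u hu0
      have h1 : qf Δ u ≤ lam * qf Pm u := by
        rw [div_le_iff₀ hPu] at hdiv; linarith
      have h2 : qf Δ u = ‖y‖⁻¹^2 * qf Δ y := by rw [hu, qf_smul_vec]
      have h3 : qf Pm u = ‖y‖⁻¹^2 * qf Pm y := by rw [hu, qf_smul_vec]
      rw [h2, h3] at h1
      have hpos : 0 < ‖y‖⁻¹^2 := by positivity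
      nlinarith
  rcases le_or_gt lam 0 with hl | hl
  · intro x
    rcases eq_or_ne x 0 with rfl | hx
    · simp [qf]
    · have := hkey x
      have := (hPpos x hx).le
      nlinarith
  · exfalso
    have heq : qf Δ x₀ = lam * qf Pm x₀ := by
      rw [hlam, div_mul_cancel₀ _ hP₀.ne']
    have h1 := hΔ x₀
    have h2 : γ * qf Δ (M₁ *ᵥ x₀) ≤ γ * (lam * qf Pm (M₁ *ᵥ x₀)) :=
      mul_le_mul_of_nonneg_left (hkey _) hγ
    have h3 : γ * qf Δ (M₂ *ᵥ x₀) ≤ γ * (lam * qf Pm (M₂ *ᵥ x₀)) :=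
      mul_le_mul_of_nonneg_left (hkey _) hγ
    have h4 := hPeq x₀
    have h5 : 0 < qf G x₀ := hGpos x₀ hx₀0
    nlinarith

lemma sq_abstract (S Sinv : Matrix (Fin m) (Fin m) ℝ) (Y L : Matrix (Fin m) (Fin n) ℝ)
    (hS1 : S * Sinv = 1) (hS2 : Sinv * S = 1) (hSsym : Sᵀ = S) :
    (L - -(Sinv * Y))ᵀ * S * (L - -(Sinv * Y)) =
      Lᵀ * S * L + Yᵀ * L + Lᵀ * Y + Yᵀ * Sinv * Y := by
  have hSinvsym : Sinvᵀ = Sinv := by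
    calc Sinvᵀ = Sinvᵀ * (S * Sinv) := by rw [hS1, Matrix.mul_one]
    _ = (Sᵀ * Sinv)ᵀ * Sinv := by
        rw [Matrix.transpose_mul, Matrix.transpose_transpose, Matrix.mul_assoc]
    _ = Sinv := by rw [hSsym, hS1, Matrix.transpose_one, Matrix.one_mul]
  have expand : (L - -(Sinv * Y))ᵀ * S * (L - -(Sinv * Y)) =
      Lᵀ * S * L + Lᵀ * (S * Sinv) * Y + Yᵀ * Sinvᵀ * (S * L)
        + Yᵀ * Sinvᵀ * (S * Sinv * Y) := by
    simp only [sub_neg_eq_add, Matrix.transpose_add, Matrix.transpose_mul, Matrix.add_mul,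
      Matrix.mul_add, Matrix.mul_assoc]
    abel
  rw [expand, hS1, hSinvsym, Matrix.mul_one]
  rw [show Yᵀ * Sinv * (S * L) = Yᵀ * (Sinv * S) * L by simp [Matrix.mul_assoc], hS2]
  simp only [Matrix.one_mul, Matrix.mul_one]
  abel

lemma expand_lyap (A C : Matrix (Fin n) (Fin n) ℝ) (B D : Matrix (Fin n) (Fin m) ℝ)
    (R : Matrix (Fin m) (Fin m) ℝ) (P' : Matrix (Fin n) (Fin n) ℝ) (hP : P'ᵀ = P')
    (L : Matrix (Fin m) (Fin n) ℝ) :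
    (A + B * L)ᵀ * P' * (A + B * L) + (C + D * L)ᵀ * P' * (C + D * L) + Lᵀ * R * L =
      Aᵀ * P' * A + Cᵀ * P' * C + (Bᵀ * P' * A + Dᵀ * P' * C)ᵀ * L
        + Lᵀ * (Bᵀ * P' * A + Dᵀ * P' * C)
        + Lᵀ * (R + Bᵀ * P' * B + Dᵀ * P' * D) * L := by
  simp only [Matrix.transpose_add, Matrix.transpose_mul, Matrix.transpose_transpose, hP,
    Matrix.add_mul, Matrix.mul_add, Matrix.mul_assoc]
  abel

/-- The main completing-the-square identity. -/
lemma complete_square (γ : ℝ) (A C : Matrix (Fin n) (Fin n) ℝ) (B D : Matrix (Fin n) (Fin m) ℝ)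
    (R : Matrix (Fin m) (Fin m) ℝ) (hRsym : Rᵀ = R)
    (Pm : Matrix (Fin n) (Fin n) ℝ) (hPsym : Pmᵀ = Pm)
    (hS1 : (R + γ • (Bᵀ * Pm * B) + γ • (Dᵀ * Pm * D)) *
      (R + γ • (Bᵀ * Pm * B) + γ • (Dᵀ * Pm * D))⁻¹ = 1)
    (hS2 : (R + γ • (Bᵀ * Pm * B) + γ • (Dᵀ * Pm * D))⁻¹ *
      (R + γ • (Bᵀ * Pm * B) + γ • (Dᵀ * Pm * D)) = 1)
    (L : Matrix (Fin m) (Fin n) ℝ) :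
    γ • ((A + B * L)ᵀ * Pm * (A + B * L)) + γ • ((C + D * L)ᵀ * Pm * (C + D * L)) + Lᵀ * R * L =
      γ • (Aᵀ * Pm * A) + γ • (Cᵀ * Pm * C) -
        (γ • (Aᵀ * Pm * B) + γ • (Cᵀ * Pm * D)) *
          (R + γ • (Bᵀ * Pm * B) + γ • (Dᵀ * Pm * D))⁻¹ *
          (γ • (Bᵀ * Pm * A) + γ • (Dᵀ * Pm * C)) +
        (L - -((R + γ • (Bᵀ * Pm * B) + γ • (Dᵀ * Pm * D))⁻¹ *
          (γ • (Bᵀ * Pm * A) + γ • (Dᵀ * Pm * C))))ᵀ *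
          (R + γ • (Bᵀ * Pm * B) + γ • (Dᵀ * Pm * D)) *
        (L - -((R + γ • (Bᵀ * Pm * B) + γ • (Dᵀ * Pm * D))⁻¹ *
          (γ • (Bᵀ * Pm * A) + γ • (Dᵀ * Pm * C)))) := by
  set P' : Matrix (Fin n) (Fin n) ℝ := γ • Pm with hP'
  have hP'sym : P'ᵀ = P' := by rw [hP', Matrix.transpose_smul, hPsym]
  have e1' : ∀ (X : Matrix (Fin n) (Fin n) ℝ), γ • (Xᵀ * Pm * X) = Xᵀ * P' * X := by
    intro X; simp [hP', Matrix.mul_smul, Matrix.smul_mul]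
  have e2 : γ • (Bᵀ * Pm * A) = Bᵀ * P' * A := by simp [hP', Matrix.mul_smul, Matrix.smul_mul]
  have e3 : γ • (Dᵀ * Pm * C) = Dᵀ * P' * C := by simp [hP', Matrix.mul_smul, Matrix.smul_mul]
  have e4 : γ • (Aᵀ * Pm * B) = Aᵀ * P' * B := by simp [hP', Matrix.mul_smul, Matrix.smul_mul]
  have e5 : γ • (Cᵀ * Pm * D) = Cᵀ * P' * D := by simp [hP', Matrix.mul_smul, Matrix.smul_mul]
  have e6 : γ • (Bᵀ * Pm * B) = Bᵀ * P' * B := by simp [hP', Matrix.mul_smul, Matrix.smul_mul]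
  have e7 : γ • (Dᵀ * Pm * D) = Dᵀ * P' * D := by simp [hP', Matrix.mul_smul, Matrix.smul_mul]
  set S : Matrix (Fin m) (Fin m) ℝ := R + Bᵀ * P' * B + Dᵀ * P' * D with hS
  set Y : Matrix (Fin m) (Fin n) ℝ := Bᵀ * P' * A + Dᵀ * P' * C with hY
  have hSold : R + γ • (Bᵀ * Pm * B) + γ • (Dᵀ * Pm * D) = S := by rw [e6, e7]
  have hYold : γ • (Bᵀ * Pm * A) + γ • (Dᵀ * Pm * C) = Y := by rw [e2, e3]
  have hZold : γ • (Aᵀ * Pm * B) + γ • (Cᵀ * Pm * D) = Yᵀ := by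
    rw [e4, e5, hY]
    simp [Matrix.transpose_add, Matrix.transpose_mul, Matrix.transpose_transpose, hP'sym,
      Matrix.mul_assoc]
  have hSsym : Sᵀ = S := by
    rw [hS]
    simp [Matrix.transpose_add, Matrix.transpose_mul, Matrix.transpose_transpose, hP'sym, hRsym,
      Matrix.mul_assoc]
  rw [hSold] at hS1 hS2
  rw [hSold, hYold, hZold, e1' (A + B * L), e1' (C + D * L), e1' A, e1' C]
  rw [expand_lyap A C B D R P' hP'sym L, ← hY, ← hS]
  rw [sq_abstract S S⁻¹ Y L hS1 hS2 hSsym]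
  abel

lemma tendsto_entry {ι : Type*} {l : Filter ι} {p q : Type*}
    {f : ι → Matrix p q ℝ} {F : Matrix p q ℝ} (hf : Tendsto f l (𝓝 F)) (j : p) (k : q) :
    Tendsto (fun i => f i j k) l (𝓝 (F j k)) :=
  tendsto_pi_nhds.mp (tendsto_pi_nhds.mp hf j) k

lemma tendsto_matrix_mul {ι : Type*} {l : Filter ι} {p q r : Type*} [Fintype q]
    {f : ι → Matrix p q ℝ} {g : ι → Matrix q r ℝ} {F : Matrix p q ℝ} {G : Matrix q r ℝ}
    (hf : Tendsto f l (𝓝 F)) (hg : Tendsto g l (𝓝 G)) :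
    Tendsto (fun i => f i * g i) l (𝓝 (F * G)) := by
  refine tendsto_pi_nhds.mpr ?_
  intro j
  rw [tendsto_pi_nhds]
  intro k
  have : ∀ i, (f i * g i) j k = ∑ t, f i j t * g i t k := fun i => Matrix.mul_apply
  simp only [this, Matrix.mul_apply]
  exact tendsto_finset_sum _ fun t _ => (tendsto_entry hf j t).mul (tendsto_entry hg t k)

lemma tendsto_matrix_transpose {ι : Type*} {l : Filter ι} {p q : Type*}
    {f : ι → Matrix p q ℝ} {F : Matrix p q ℝ} (hf : Tendsto f l (𝓝 F)) :
    Tendsto (fun i => (f i)ᵀ) l (𝓝 Fᵀ) := by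
  refine tendsto_pi_nhds.mpr ?_
  intro j
  rw [tendsto_pi_nhds]
  intro k
  exact tendsto_entry hf k j

lemma tendsto_matrix_smul {ι : Type*} {l : Filter ι} {p q : Type*} (c : ℝ)
    {f : ι → Matrix p q ℝ} {F : Matrix p q ℝ} (hf : Tendsto f l (𝓝 F)) :
    Tendsto (fun i => c • f i) l (𝓝 (c • F)) := by
  refine tendsto_pi_nhds.mpr ?_
  intro j
  rw [tendsto_pi_nhds]
  intro k
  exact (tendsto_entry hf j k).const_mul c

end Stmt13Aux

open Stmt13Aux

set_option maxHeartbeats 16000000 in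
theorem stmt13 {n m : ℕ} (A C : Matrix (Fin n) (Fin n) ℝ)
    (B D : Matrix (Fin n) (Fin m) ℝ)
    (Q : Matrix (Fin n) (Fin n) ℝ) (R : Matrix (Fin m) (Fin m) ℝ) (γ : ℝ)
    (hQ : Q.PosDef) (hR : R.PosDef) (hγ0 : 0 ≤ γ) (hγ1 : γ < 1)
    (L : ℕ → Matrix (Fin m) (Fin n) ℝ) (P : ℕ → Matrix (Fin n) (Fin n) ℝ)
    (hPpd : ∀ i, (P i).PosDef)
    (hsle : ∀ i, P i = γ • ((A + B * L i)ᵀ * P i * (A + B * L i)) +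
      γ • ((C + D * L i)ᵀ * P i * (C + D * L i)) + (L i)ᵀ * R * (L i) + Q)
    (hupd : ∀ i, L (i + 1) = -((R + γ • (Bᵀ * P i * B) + γ • (Dᵀ * P i * D))⁻¹ *
      (γ • (Bᵀ * P i * A) + γ • (Dᵀ * P i * C))))
    (Pstar : Matrix (Fin n) (Fin n) ℝ) (hPstar : Pstar.PosDef)
    (hsare : Pstar = Q + γ • (Aᵀ * Pstar * A) + γ • (Cᵀ * Pstar * C) -
      (γ • (Aᵀ * Pstar * B) + γ • (Cᵀ * Pstar * D)) *
        (R + γ • (Bᵀ * Pstar * B) + γ • (Dᵀ * Pstar * D))⁻¹ *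
        (γ • (Bᵀ * Pstar * A) + γ • (Dᵀ * Pstar * C)))
    (huniq : ∀ P' : Matrix (Fin n) (Fin n) ℝ, P'.PosDef →
      P' = Q + γ • (Aᵀ * P' * A) + γ • (Cᵀ * P' * C) -
        (γ • (Aᵀ * P' * B) + γ • (Cᵀ * P' * D)) *
          (R + γ • (Bᵀ * P' * B) + γ • (Dᵀ * P' * D))⁻¹ *
          (γ • (Bᵀ * P' * A) + γ • (Dᵀ * P' * C)) → P' = Pstar)
    (Lstar : Matrix (Fin m) (Fin n) ℝ)
    (hLstar : Lstar = -((R + γ • (Bᵀ * Pstar * B) + γ • (Dᵀ * Pstar * D))⁻¹ *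
      (γ • (Bᵀ * Pstar * A) + γ • (Dᵀ * Pstar * C)))) :
    Tendsto P atTop (𝓝 Pstar) ∧ Tendsto L atTop (𝓝 Lstar) := by
  classical
  have hRsym : Rᵀ = R := (isHermitian_iff_transpose R).mp hR.1
  have hPsym : ∀ i, (P i)ᵀ = P i := fun i => (isHermitian_iff_transpose _).mp (hPpd i).1
  -- positive definiteness of the S-matrices
  have hSpd : ∀ (Pm : Matrix (Fin n) (Fin n) ℝ), Pmᵀ = Pm → (∀ x, 0 ≤ qf Pm x) →
      (R + γ • (Bᵀ * Pm * B) + γ • (Dᵀ * Pm * D)).PosDef := by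
    intro Pm hsym hpsd
    apply posDef_of_qf
    · simp [Matrix.transpose_add, Matrix.transpose_smul, Matrix.transpose_mul,
        Matrix.transpose_transpose, hsym, hRsym, Matrix.mul_assoc]
    · intro x hx
      rw [qf_add, qf_add, qf_smul, qf_smul, qf_conj', qf_conj']
      have h1 := hpsd (B *ᵥ x)
      have h2 := hpsd (D *ᵥ x)
      have h3 := PosDef.qf_pos hR hx
      nlinarith
  have hPipsd : ∀ i x, 0 ≤ qf (P i) x := by
    intro i x
    rcases eq_or_ne x 0 with rfl | hx
    · simp [qf]
    · exact (PosDef.qf_pos (hPpd i) hx).le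
  have hSipd : ∀ i, (R + γ • (Bᵀ * P i * B) + γ • (Dᵀ * P i * D)).PosDef :=
    fun i => hSpd (P i) (hPsym i) (hPipsd i)
  have hSi1 : ∀ i, (R + γ • (Bᵀ * P i * B) + γ • (Dᵀ * P i * D)) *
      (R + γ • (Bᵀ * P i * B) + γ • (Dᵀ * P i * D))⁻¹ = 1 := by
    intro i
    exact Matrix.mul_nonsing_inv _ ((Matrix.isUnit_iff_isUnit_det _).mp (hSipd i).isUnit)
  have hSi2 : ∀ i, (R + γ • (Bᵀ * P i * B) + γ • (Dᵀ * P i * D))⁻¹ *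
      (R + γ • (Bᵀ * P i * B) + γ • (Dᵀ * P i * D)) = 1 := by
    intro i
    exact Matrix.nonsing_inv_mul _ ((Matrix.isUnit_iff_isUnit_det _).mp (hSipd i).isUnit)
  -- the one-step identity: P i satisfies a Lyapunov-type equation with gain L (i+1)
  have hstep : ∀ i, P i =
      γ • ((A + B * L (i+1))ᵀ * P i * (A + B * L (i+1))) +
      γ • ((C + D * L (i+1))ᵀ * P i * (C + D * L (i+1))) +
      (L (i+1))ᵀ * R * (L (i+1)) + Q +
      (L i - L (i+1))ᵀ * (R + γ • (Bᵀ * P i * B) + γ • (Dᵀ * P i * D)) * (L i - L (i+1)) := by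
    intro i
    have cs1 := complete_square γ A C B D R hRsym (P i) (hPsym i) (hSi1 i) (hSi2 i) (L i)
    have cs2 := complete_square γ A C B D R hRsym (P i) (hPsym i) (hSi1 i) (hSi2 i) (L (i+1))
    rw [← hupd i] at cs1 cs2
    rw [sub_self] at cs2
    simp only [Matrix.transpose_zero, Matrix.zero_mul, Matrix.mul_zero, add_zero] at cs2
    calc P i = γ • ((A + B * L i)ᵀ * P i * (A + B * L i)) +
        γ • ((C + D * L i)ᵀ * P i * (C + D * L i)) + (L i)ᵀ * R * (L i) + Q := hsle i
      _ = (γ • (Aᵀ * P i * A) + γ • (Cᵀ * P i * C) -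
            (γ • (Aᵀ * P i * B) + γ • (Cᵀ * P i * D)) *
              (R + γ • (Bᵀ * P i * B) + γ • (Dᵀ * P i * D))⁻¹ *
              (γ • (Bᵀ * P i * A) + γ • (Dᵀ * P i * C)) +
            (L i - L (i+1))ᵀ * (R + γ • (Bᵀ * P i * B) + γ • (Dᵀ * P i * D)) *
              (L i - L (i+1))) + Q := by rw [cs1]
      _ = (γ • ((A + B * L (i+1))ᵀ * P i * (A + B * L (i+1))) +
            γ • ((C + D * L (i+1))ᵀ * P i * (C + D * L (i+1))) +
            (L (i+1))ᵀ * R * (L (i+1)) +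
            (L i - L (i+1))ᵀ * (R + γ • (Bᵀ * P i * B) + γ • (Dᵀ * P i * D)) *
              (L i - L (i+1))) + Q := by rw [cs2]
      _ = _ := by abel
  -- monotonicity of the quadratic forms
  have hqmono : ∀ i x, qf (P (i+1)) x ≤ qf (P i) x := by
    intro i
    have hcmp := comparison γ hγ0 (A + B * L (i+1)) (C + D * L (i+1)) (P (i+1))
      (Q + (L (i+1))ᵀ * R * (L (i+1))) (P (i+1) - P i)
      (fun x hx => PosDef.qf_pos (hPpd (i+1)) hx)
      (by
        intro x hx
        rw [qf_add, qf_conj']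
        have h1 := PosDef.qf_pos hQ hx
        have h2 : 0 ≤ qf R (L (i+1) *ᵥ x) := PosSemidef.qf_nonneg hR.posSemidef _
        linarith)
      (by
        intro x
        have := congrArg (fun M => qf M x) (hsle (i+1))
        simp only [qf_add, qf_smul, qf_conj, qf_conj'] at this
        rw [this]
        rw [qf_add, qf_conj']
        ring)
      (by
        intro x
        have h1 := congrArg (fun M => qf M x) (hsle (i+1))
        simp only [qf_add, qf_smul, qf_conj, qf_conj'] at h1
        have h2 := congrArg (fun M => qf M x) (hstep i)
        simp only [qf_add, qf_smul, qf_conj, qf_conj'] at h2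
        have h3 : 0 ≤ qf (R + γ • (Bᵀ * P i * B) + γ • (Dᵀ * P i * D))
            ((L i - L (i+1)) *ᵥ x) := PosSemidef.qf_nonneg (hSipd i).posSemidef _
        rw [qf_add, qf_add, qf_smul, qf_smul, qf_conj', qf_conj'] at h3
        simp only [qf_sub]
        linarith)
    intro x
    have := hcmp x
    rw [qf_sub] at this
    linarith
  -- convergence of quadratic forms
  have hmono' : ∀ x, Antitone fun i => qf (P i) x := fun x =>
    antitone_nat_of_succ_le (fun i => hqmono i x)
  have hbdd : ∀ x, BddBelow (Set.range fun i => qf (P i) x) := by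
    intro x
    refine ⟨0, ?_⟩
    rintro y ⟨i, rfl⟩
    exact hPipsd i x
  have hq : ∀ x, Tendsto (fun i => qf (P i) x) atTop (𝓝 (⨅ i, qf (P i) x)) :=
    fun x => tendsto_atTop_ciInf (hmono' x) (hbdd x)
  -- the limit matrix
  set Plim : Matrix (Fin n) (Fin n) ℝ := Matrix.of fun j k =>
    ((⨅ i, qf (P i) (Pi.single j 1 + Pi.single k 1)) - (⨅ i, qf (P i) (Pi.single j 1))
      - (⨅ i, qf (P i) (Pi.single k 1))) / 2 with hPlimdef
  have hpolar : ∀ (M : Matrix (Fin n) (Fin n) ℝ), Mᵀ = M → ∀ j k, M j k =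
      (qf M (Pi.single j 1 + Pi.single k 1) - qf M (Pi.single j 1) - qf M (Pi.single k 1)) / 2 := by
    intro M hsym j k
    have hkj : M k j = M j k := by
      conv_lhs => rw [← hsym]
      rfl
    simp only [qf, Matrix.mulVec_add, dotProduct_add, add_dotProduct]
    have e : ∀ a b : Fin n, Pi.single a (1:ℝ) ⬝ᵥ M *ᵥ Pi.single b 1 = M a b := by
      intro a b
      simp [Matrix.mulVec_single, dotProduct, Pi.single_apply]
    rw [e, e, e, e, hkj]
    ring
  have hPtend : Tendsto P atTop (𝓝 Plim) := by
    refine tendsto_pi_nhds.mpr ?_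
    intro j
    rw [tendsto_pi_nhds]
    intro k
    have heq : (fun i => P i j k) = fun i =>
        (qf (P i) (Pi.single j 1 + Pi.single k 1) - qf (P i) (Pi.single j 1)
          - qf (P i) (Pi.single k 1)) / 2 :=
      funext fun i => hpolar (P i) (hPsym i) j k
    rw [heq]
    have hPl : Plim j k = ((⨅ i, qf (P i) (Pi.single j 1 + Pi.single k 1))
        - (⨅ i, qf (P i) (Pi.single j 1)) - (⨅ i, qf (P i) (Pi.single k 1))) / 2 := rfl
    rw [hPl]
    exact (((hq _).sub (hq _)).sub (hq _)).div_const 2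
  -- properties of the limit
  have hqf_lim : ∀ x, Tendsto (fun i => qf (P i) x) atTop (𝓝 (qf Plim x)) :=
    fun x => ((qf_continuous_matrix x).tendsto Plim).comp hPtend
  have hPlim_psd : ∀ x, 0 ≤ qf Plim x := fun x =>
    ge_of_tendsto' (hqf_lim x) (fun i => hPipsd i x)
  have hPlim_symm : Plimᵀ = Plim := by
    have h1 : Tendsto (fun i => (P i)ᵀ) atTop (𝓝 Plimᵀ) :=
      ((continuous_id.matrix_transpose).tendsto Plim).comp hPtend
    have h2 : (fun i => (P i)ᵀ) = P := funext hPsym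
    rw [h2] at h1
    exact tendsto_nhds_unique h1 hPtend
  -- convergence of the S and Y matrices
  have hStend : Tendsto (fun i => R + γ • (Bᵀ * P i * B) + γ • (Dᵀ * P i * D)) atTop
      (𝓝 (R + γ • (Bᵀ * Plim * B) + γ • (Dᵀ * Plim * D))) :=
    (tendsto_const_nhds.add (tendsto_matrix_smul γ
        (tendsto_matrix_mul (tendsto_matrix_mul tendsto_const_nhds hPtend)
          tendsto_const_nhds))).add
      (tendsto_matrix_smul γ
        (tendsto_matrix_mul (tendsto_matrix_mul tendsto_const_nhds hPtend) tendsto_const_nhds))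
  have hYtend : Tendsto (fun i => γ • (Bᵀ * P i * A) + γ • (Dᵀ * P i * C)) atTop
      (𝓝 (γ • (Bᵀ * Plim * A) + γ • (Dᵀ * Plim * C))) :=
    (tendsto_matrix_smul γ
        (tendsto_matrix_mul (tendsto_matrix_mul tendsto_const_nhds hPtend)
          tendsto_const_nhds)).add
      (tendsto_matrix_smul γ
        (tendsto_matrix_mul (tendsto_matrix_mul tendsto_const_nhds hPtend) tendsto_const_nhds))
  have hSlimpd : (R + γ • (Bᵀ * Plim * B) + γ • (Dᵀ * Plim * D)).PosDef :=
    hSpd Plim hPlim_symm hPlim_psd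
  have hdet : IsUnit (R + γ • (Bᵀ * Plim * B) + γ • (Dᵀ * Plim * D)).det :=
    (Matrix.isUnit_iff_isUnit_det _).mp hSlimpd.isUnit
  have hinv_cont : ContinuousAt Inv.inv (R + γ • (Bᵀ * Plim * B) + γ • (Dᵀ * Plim * D)) := by
    apply continuousAt_matrix_inv
    have hdet' : (R + γ • (Bᵀ * Plim * B) + γ • (Dᵀ * Plim * D)).det ≠ 0 :=
      hSlimpd.det_pos.ne'
    exact NormedRing.inverse_continuousAt (Units.mk0 _ hdet')
  have hSinvtend : Tendsto (fun i => (R + γ • (Bᵀ * P i * B) + γ • (Dᵀ * P i * D))⁻¹) atTop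
      (𝓝 (R + γ • (Bᵀ * Plim * B) + γ • (Dᵀ * Plim * D))⁻¹) :=
    hinv_cont.tendsto.comp hStend
  -- convergence of gains
  set Linf : Matrix (Fin m) (Fin n) ℝ :=
    -((R + γ • (Bᵀ * Plim * B) + γ • (Dᵀ * Plim * D))⁻¹ *
      (γ • (Bᵀ * Plim * A) + γ • (Dᵀ * Plim * C))) with hLinfdef
  have hLtend : Tendsto (fun i => L (i + 1)) atTop (𝓝 Linf) := by
    have heq : (fun i => L (i + 1)) = fun i =>
        -((R + γ • (Bᵀ * P i * B) + γ • (Dᵀ * P i * D))⁻¹ *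
          (γ • (Bᵀ * P i * A) + γ • (Dᵀ * P i * C))) := funext fun i => hupd i
    rw [heq, hLinfdef]
    exact (tendsto_matrix_mul hSinvtend hYtend).neg
  have hPtend1 : Tendsto (fun i => P (i + 1)) atTop (𝓝 Plim) :=
    hPtend.comp (tendsto_add_atTop_nat 1)
  -- the limit equation
  have hABL : Tendsto (fun i => A + B * L (i+1)) atTop (𝓝 (A + B * Linf)) :=
    tendsto_const_nhds.add (tendsto_matrix_mul tendsto_const_nhds hLtend)
  have hCDL : Tendsto (fun i => C + D * L (i+1)) atTop (𝓝 (C + D * Linf)) :=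
    tendsto_const_nhds.add (tendsto_matrix_mul tendsto_const_nhds hLtend)
  have hlimeq : Plim =
      γ • ((A + B * Linf)ᵀ * Plim * (A + B * Linf)) +
      γ • ((C + D * Linf)ᵀ * Plim * (C + D * Linf)) + Linfᵀ * R * Linf + Q := by
    have t1 : Tendsto (fun i => γ • ((A + B * L (i+1))ᵀ * P (i+1) * (A + B * L (i+1)))) atTop
        (𝓝 (γ • ((A + B * Linf)ᵀ * Plim * (A + B * Linf)))) :=
      tendsto_matrix_smul γ
        (tendsto_matrix_mul (tendsto_matrix_mul (tendsto_matrix_transpose hABL) hPtend1) hABL)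
    have t2 : Tendsto (fun i => γ • ((C + D * L (i+1))ᵀ * P (i+1) * (C + D * L (i+1)))) atTop
        (𝓝 (γ • ((C + D * Linf)ᵀ * Plim * (C + D * Linf)))) :=
      tendsto_matrix_smul γ
        (tendsto_matrix_mul (tendsto_matrix_mul (tendsto_matrix_transpose hCDL) hPtend1) hCDL)
    have t3 : Tendsto (fun i => (L (i+1))ᵀ * R * (L (i+1))) atTop
        (𝓝 (Linfᵀ * R * Linf)) :=
      tendsto_matrix_mul (tendsto_matrix_mul (tendsto_matrix_transpose hLtend)
        tendsto_const_nhds) hLtend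
    have hrhs : Tendsto (fun i =>
        γ • ((A + B * L (i+1))ᵀ * P (i+1) * (A + B * L (i+1))) +
        γ • ((C + D * L (i+1))ᵀ * P (i+1) * (C + D * L (i+1))) +
        (L (i+1))ᵀ * R * (L (i+1)) + Q) atTop
        (𝓝 (γ • ((A + B * Linf)ᵀ * Plim * (A + B * Linf)) +
          γ • ((C + D * Linf)ᵀ * Plim * (C + D * Linf)) + Linfᵀ * R * Linf + Q)) :=
      ((t1.add t2).add t3).add tendsto_const_nhds
    have hlhs : (fun i =>
        γ • ((A + B * L (i+1))ᵀ * P (i+1) * (A + B * L (i+1))) +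
        γ • ((C + D * L (i+1))ᵀ * P (i+1) * (C + D * L (i+1))) +
        (L (i+1))ᵀ * R * (L (i+1)) + Q) = fun i => P (i+1) :=
      funext fun i => (hsle (i+1)).symm
    rw [hlhs] at hrhs
    exact tendsto_nhds_unique hPtend1 hrhs
  -- Plim is positive definite
  have hPlim_pd : Plim.PosDef := by
    apply posDef_of_qf hPlim_symm
    intro x hx
    have := congrArg (fun M => qf M x) hlimeq
    simp only [qf_add, qf_smul, qf_conj, qf_conj'] at this
    rw [this]
    have h1 := hPlim_psd ((A + B * Linf) *ᵥ x)
    have h2 := hPlim_psd ((C + D * Linf) *ᵥ x)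
    have h3 : 0 ≤ qf R (Linf *ᵥ x) := PosSemidef.qf_nonneg hR.posSemidef _
    have h4 := PosDef.qf_pos hQ hx
    nlinarith
  -- Plim satisfies the SARE
  have hSlim1 : (R + γ • (Bᵀ * Plim * B) + γ • (Dᵀ * Plim * D)) *
      (R + γ • (Bᵀ * Plim * B) + γ • (Dᵀ * Plim * D))⁻¹ = 1 :=
    Matrix.mul_nonsing_inv _ hdet
  have hSlim2 : (R + γ • (Bᵀ * Plim * B) + γ • (Dᵀ * Plim * D))⁻¹ *
      (R + γ • (Bᵀ * Plim * B) + γ • (Dᵀ * Plim * D)) = 1 :=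
    Matrix.nonsing_inv_mul _ hdet
  have hsare_lim : Plim = Q + γ • (Aᵀ * Plim * A) + γ • (Cᵀ * Plim * C) -
      (γ • (Aᵀ * Plim * B) + γ • (Cᵀ * Plim * D)) *
        (R + γ • (Bᵀ * Plim * B) + γ • (Dᵀ * Plim * D))⁻¹ *
        (γ • (Bᵀ * Plim * A) + γ • (Dᵀ * Plim * C)) := by
    have cs := complete_square γ A C B D R hRsym Plim hPlim_symm hSlim1 hSlim2 Linf
    rw [← hLinfdef, sub_self] at cs
    simp only [Matrix.transpose_zero, Matrix.zero_mul, Matrix.mul_zero, add_zero] at cs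
    calc Plim = γ • ((A + B * Linf)ᵀ * Plim * (A + B * Linf)) +
        γ • ((C + D * Linf)ᵀ * Plim * (C + D * Linf)) + Linfᵀ * R * Linf + Q := hlimeq
      _ = (γ • (Aᵀ * Plim * A) + γ • (Cᵀ * Plim * C) -
            (γ • (Aᵀ * Plim * B) + γ • (Cᵀ * Plim * D)) *
              (R + γ • (Bᵀ * Plim * B) + γ • (Dᵀ * Plim * D))⁻¹ *
              (γ • (Bᵀ * Plim * A) + γ • (Dᵀ * Plim * C))) + Q := by rw [cs]
      _ = _ := by abel
  have hPlimstar : Plim = Pstar := huniq Plim hPlim_pd hsare_lim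
  have hLinfstar : Linf = Lstar := by
    rw [hLstar, ← hPlimstar, hLinfdef]
  constructor
  · exact hPlimstar ▸ hPtend
  · exact (tendsto_add_atTop_iff_nat 1).mp (hLinfstar ▸ hLtend)
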